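/- For a segment [a,b] ⊂ ℝ² and any λ > 0, with I_λ defined as I_λ(A) := (1/(2λπ)) ∫_{S¹} ℒ²(A_{λ,ν}) dH¹(ν), one has I_λ([a,b]) ≥ (2/π)|a − b|. -/

import Mathlib

open MeasureTheory Metric Set Filter Topology
open scoped ENNReal NNReal

/-- The `λ`-enlargement of `A` in the direction `ν`: `A_{λ,ν} = {a + tν : |t| ≤ λ, a ∈ A}`. -/
def enlarge (A : Set (EuclideanSpace ℝ (Fin 2))) (lam : ℝ) (ν : EuclideanSpace ℝ (Fin 2)) :
    Set (EuclideanSpace ℝ (Fin 2)) :=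
  {p | ∃ a ∈ A, ∃ t : ℝ, |t| ≤ lam ∧ p = a + t • ν}

/-- The averaged directional enlargement quantity
`I_λ(A) = (1/(2λπ)) ∫_{S¹} ℒ²(A_{λ,ν}) dH¹(ν)`. -/
noncomputable def Ilam (lam : ℝ) (A : Set (EuclideanSpace ℝ (Fin 2))) : ℝ≥0∞ :=
  ENNReal.ofReal (1 / (2 * lam * Real.pi)) *
    ∫⁻ ν in sphere (0 : EuclideanSpace ℝ (Fin 2)) 1, volume (enlarge A lam ν) ∂(μH[1])

section Stmt9Aux

open scoped RealInnerProductSpace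

local notation "E2" => EuclideanSpace ℝ (Fin 2)

/-- The linear map sending `p` to `p 0 • v + p 1 • ν`. -/
noncomputable def Lmap (v ν : E2) : E2 →ₗ[ℝ] E2 where
  toFun p := p 0 • v + p 1 • ν
  map_add' p q := by
    show (p 0 + q 0) • v + (p 1 + q 1) • ν = _
    simp [add_smul]; abel
  map_smul' c p := by
    show (c * p 0) • v + (c * p 1) • ν = _
    simp [mul_smul, smul_add]

lemma Lmap_det (v ν : E2) : LinearMap.det (Lmap v ν) = v 0 * ν 1 - v 1 * ν 0 := by
  let b := (EuclideanSpace.basisFun (Fin 2) ℝ).toBasis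
  rw [← LinearMap.det_toMatrix b, Matrix.det_fin_two]
  have h : ∀ i j : Fin 2, LinearMap.toMatrix b b (Lmap v ν) i j
      = ((EuclideanSpace.single j (1:ℝ)) 0 • v + (EuclideanSpace.single j (1:ℝ)) 1 • ν) i := by
    intro i j
    simp [LinearMap.toMatrix_apply, b, Lmap]
  simp only [h, EuclideanSpace.single_apply]
  norm_num
  ring

/-- The coordinate box `[0,1] × [-lam, lam]`. -/
def ebox (lam : ℝ) : Set E2 := {p | p 0 ∈ Icc (0:ℝ) 1 ∧ p 1 ∈ Icc (-lam) lam}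

lemma volume_ebox (lam : ℝ) : volume (ebox lam) = ENNReal.ofReal (2 * lam) := by
  have heq : ebox lam = (MeasurableEquiv.toLp 2 (Fin 2 → ℝ)).symm ⁻¹'
      (Set.univ.pi fun i : Fin 2 => if i = 0 then Icc (0:ℝ) 1 else Icc (-lam) lam) := by
    ext p
    simp only [ebox, mem_setOf_eq, mem_preimage, Set.mem_pi, Set.mem_univ, forall_true_left]
    constructor
    · rintro ⟨h0, h1⟩ i
      fin_cases i <;> simp [h0, h1]
    · intro h
      refine ⟨by simpa using h 0, by simpa using h 1⟩
  rw [heq, (EuclideanSpace.volume_preserving_symm_measurableEquiv_toLp (Fin 2)).measure_preimage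
    ((MeasurableSet.univ_pi (fun i => by split <;> exact measurableSet_Icc)).nullMeasurableSet)]
  rw [volume_pi_pi, Fin.prod_univ_two]
  simp [Real.volume_Icc]
  congr 1
  ring_nf
  rw [ENNReal.ofReal_mul' (by norm_num), ENNReal.ofReal_ofNat]

lemma volume_enlarge_ge (a b : E2) (lam : ℝ) (ν : E2) :
    ENNReal.ofReal (2 * lam * |(b - a) 0 * ν 1 - (b - a) 1 * ν 0|)
      ≤ volume (enlarge (segment ℝ a b) lam ν) := by
  set v := b - a with hv
  set L := Lmap v ν with hL
  have himg : (fun p => a + p) '' (L '' ebox lam) ⊆ enlarge (segment ℝ a b) lam ν := by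
    rintro _ ⟨_, ⟨q, ⟨hq0, hq1⟩, rfl⟩, rfl⟩
    refine ⟨a + q 0 • v, ?_, q 1, ?_, ?_⟩
    · rw [segment_eq_image']
      exact ⟨q 0, hq0, rfl⟩
    · rw [abs_le]
      exact ⟨hq1.1, hq1.2⟩
    · show a + L q = (a + q 0 • v) + q 1 • ν
      show a + (q 0 • v + q 1 • ν) = _
      rw [add_assoc]
  refine le_trans (le_of_eq ?_) (measure_mono himg)
  rw [Set.image_add_left, measure_preimage_add, Measure.addHaar_image_linearMap,
    hL, Lmap_det, volume_ebox lam, ← ENNReal.ofReal_mul (abs_nonneg _)]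
  congr 1
  ring

lemma arc_measure_ge (u' : E2) (hu' : ‖u'‖ = 1) (s : Set E2)
    (hsub : Icc (-(Real.sqrt 2 / 2)) (Real.sqrt 2 / 2) ⊆ (fun ν => ⟪u', ν⟫) '' s) :
    ENNReal.ofReal (Real.sqrt 2) ≤ μH[1] s := by
  have lip : LipschitzWith 1 (fun ν : E2 => ⟪u', ν⟫) := by
    have h1 : ‖innerSL ℝ u'‖₊ ≤ 1 := by
      rw [← NNReal.coe_le_coe, coe_nnnorm, NNReal.coe_one, innerSL_apply_norm, hu']
    exact ((innerSL ℝ u').lipschitz.weaken h1)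
  calc ENNReal.ofReal (Real.sqrt 2)
      = μH[1] (Icc (-(Real.sqrt 2 / 2)) (Real.sqrt 2 / 2)) := by
        rw [hausdorffMeasure_real, Real.volume_Icc]
        congr 1
        ring
    _ ≤ μH[1] ((fun ν : E2 => ⟪u', ν⟫) '' s) := measure_mono hsub
    _ ≤ (1 : ℝ≥0∞) ^ (1:ℝ) * μH[1] s := lip.hausdorffMeasure_image_le zero_le_one s
    _ = μH[1] s := by simp

set_option maxHeartbeats 2000000 in
lemma sphere_lintegral_ge (w : E2) (hw : w ≠ 0) :
    ENNReal.ofReal (2 * ‖w‖)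
      ≤ ∫⁻ ν in sphere (0 : E2) 1, ENNReal.ofReal |⟪w, ν⟫| ∂(μH[1]) := by
  have hwn : (0:ℝ) < ‖w‖ := norm_pos_iff.mpr hw
  obtain ⟨wp, hwpdef⟩ : ∃ wp : E2, wp = (WithLp.equiv 2 (Fin 2 → ℝ)).symm ![-(w 1), w 0] :=
    ⟨_, rfl⟩
  have hwp0 : wp 0 = -(w 1) := by rw [hwpdef]; rfl
  have hwp1 : wp 1 = w 0 := by rw [hwpdef]; rfl
  have hwpn : ‖wp‖ = ‖w‖ := by
    rw [EuclideanSpace.norm_eq, EuclideanSpace.norm_eq, Fin.sum_univ_two, Fin.sum_univ_two,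
      hwp0, hwp1, norm_neg, add_comm]
  have horth : ⟪wp, w⟫ = 0 := by
    rw [PiLp.inner_apply, Fin.sum_univ_two]
    simp only [hwp0, hwp1, RCLike.inner_apply, conj_trivial]
    ring
  obtain ⟨u, hu⟩ : ∃ u : E2, u = ‖w‖⁻¹ • w := ⟨_, rfl⟩
  obtain ⟨u', hu'⟩ : ∃ u' : E2, u' = ‖w‖⁻¹ • wp := ⟨_, rfl⟩
  have hun : ‖u‖ = 1 := by
    rw [hu, norm_smul, norm_inv, norm_norm, inv_mul_cancel₀ hwn.ne']
  have hu'n : ‖u'‖ = 1 := by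
    rw [hu', norm_smul, norm_inv, norm_norm, hwpn, inv_mul_cancel₀ hwn.ne']
  have horth' : ⟪u', u⟫ = 0 := by
    rw [hu, hu', real_inner_smul_left, real_inner_smul_right, horth]
    ring
  have hwu' : ⟪w, u'⟫ = 0 := by
    rw [hu', real_inner_smul_right, real_inner_comm, horth]; ring
  have hwu : ⟪w, u⟫ = ‖w‖ := by
    rw [hu, real_inner_smul_right, real_inner_self_eq_norm_sq]
    field_simp
  obtain ⟨c, hc⟩ : ∃ c : ℝ, c = Real.sqrt 2 / 2 * ‖w‖ := ⟨_, rfl⟩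
  have hcpos : 0 < c := by rw [hc]; positivity
  have hpoint : ∀ x ∈ Icc (-(Real.sqrt 2 / 2)) (Real.sqrt 2 / 2), ∀ ε : ℝ, ε = 1 ∨ ε = -1 →
      ∃ ν : E2, ν ∈ sphere (0:E2) 1 ∧ ⟪w, ν⟫ = ε * (Real.sqrt (1 - x^2) * ‖w‖) ∧
        ⟪u', ν⟫ = x ∧ Real.sqrt 2 / 2 ≤ Real.sqrt (1 - x^2) := by
    intro x hx ε hε
    have h2 : (Real.sqrt 2 / 2)^2 = 1/2 := by
      rw [div_pow, Real.sq_sqrt (by norm_num : (0:ℝ) ≤ 2)]; norm_num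
    have hx2 : x^2 ≤ 1/2 := by
      have h3 := abs_le.mpr ⟨hx.1, hx.2⟩
      nlinarith [sq_abs x, sq_nonneg (|x| - Real.sqrt 2 / 2), abs_nonneg x]
    have hy2 : (Real.sqrt (1 - x^2))^2 = 1 - x^2 := Real.sq_sqrt (by nlinarith)
    set y : ℝ := Real.sqrt (1 - x^2) with hy
    have hyge : Real.sqrt 2 / 2 ≤ y := by
      have h4 : (Real.sqrt 2 / 2)^2 ≤ 1 - x^2 := by rw [h2]; linarith
      have h5 := Real.sqrt_le_sqrt h4
      rwa [Real.sqrt_sq (by positivity)] at h5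
    have hε2 : ε^2 = 1 := by rcases hε with h | h <;> rw [h] <;> norm_num
    refine ⟨x • u' + (ε * y) • u, ?_, ?_, ?_, hyge⟩
    · rw [mem_sphere_zero_iff_norm]
      have hsq : ‖x • u' + (ε * y) • u‖^2 = 1 := by
        rw [norm_add_sq_real, real_inner_smul_left, real_inner_smul_right, horth',
          norm_smul, norm_smul, hun, hu'n]
        simp only [Real.norm_eq_abs]
        nlinarith [sq_abs x, sq_abs (ε * y)]
      nlinarith [norm_nonneg (x • u' + (ε * y) • u)]
    · rw [inner_add_right, real_inner_smul_right, real_inner_smul_right, hwu', hwu]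
      ring
    · rw [inner_add_right, real_inner_smul_right, real_inner_smul_right, horth',
        real_inner_self_eq_norm_sq, hu'n]
      ring
  obtain ⟨sp, hspdef⟩ : ∃ s : Set E2, s = sphere (0:E2) 1 ∩ {ν | c ≤ ⟪w, ν⟫} := ⟨_, rfl⟩
  obtain ⟨sm, hsmdef⟩ : ∃ s : Set E2, s = sphere (0:E2) 1 ∩ {ν | ⟪w, ν⟫ ≤ -c} := ⟨_, rfl⟩
  have hinner_cont : Continuous fun ν : E2 => ⟪w, ν⟫ :=
    Continuous.inner continuous_const continuous_id
  have msp : MeasurableSet sp := by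
    rw [hspdef]
    exact (isClosed_sphere.inter (isClosed_le continuous_const hinner_cont)).measurableSet
  have msm : MeasurableSet sm := by
    rw [hsmdef]
    exact (isClosed_sphere.inter (isClosed_le hinner_cont continuous_const)).measurableSet
  have hdisj : Disjoint sp sm := by
    rw [Set.disjoint_left]
    rintro ν hp hm
    rw [hspdef] at hp; rw [hsmdef] at hm
    have h1 := hp.2
    have h2 := hm.2
    simp only [mem_setOf_eq] at h1 h2
    linarith
  have hsub_p : Icc (-(Real.sqrt 2 / 2)) (Real.sqrt 2 / 2) ⊆ (fun ν => ⟪u', ν⟫) '' sp := by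
    intro x hx
    obtain ⟨ν, hsph, hwv, hu'v, hyge⟩ := hpoint x hx 1 (Or.inl rfl)
    refine ⟨ν, ?_, hu'v⟩
    rw [hspdef]
    refine ⟨hsph, ?_⟩
    show c ≤ ⟪w, ν⟫
    rw [hwv, hc, one_mul]
    nlinarith [hwn.le]
  have hsub_m : Icc (-(Real.sqrt 2 / 2)) (Real.sqrt 2 / 2) ⊆ (fun ν => ⟪u', ν⟫) '' sm := by
    intro x hx
    obtain ⟨ν, hsph, hwv, hu'v, hyge⟩ := hpoint x hx (-1) (Or.inr rfl)
    refine ⟨ν, ?_, hu'v⟩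
    rw [hsmdef]
    refine ⟨hsph, ?_⟩
    show ⟪w, ν⟫ ≤ -c
    rw [hwv, hc]
    nlinarith [hwn.le]
  have measp := arc_measure_ge u' hu'n sp hsub_p
  have measm := arc_measure_ge u' hu'n sm hsub_m
  have hpt_p : ∀ ν ∈ sp, ENNReal.ofReal c ≤ ENNReal.ofReal |⟪w, ν⟫| := by
    intro ν hν
    rw [hspdef] at hν
    exact ENNReal.ofReal_le_ofReal (le_trans hν.2 (le_abs_self _))
  have hpt_m : ∀ ν ∈ sm, ENNReal.ofReal c ≤ ENNReal.ofReal |⟪w, ν⟫| := by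
    intro ν hν
    rw [hsmdef] at hν
    have h2 : ⟪w, ν⟫ ≤ -c := hν.2
    have h1 : c ≤ -⟪w, ν⟫ := by linarith
    exact ENNReal.ofReal_le_ofReal (le_trans h1 (neg_le_abs _))
  have h22 : Real.sqrt 2 * Real.sqrt 2 = 2 := Real.mul_self_sqrt (by norm_num)
  calc ENNReal.ofReal (2 * ‖w‖)
      = ENNReal.ofReal c * (ENNReal.ofReal (Real.sqrt 2) + ENNReal.ofReal (Real.sqrt 2)) := by
        rw [← ENNReal.ofReal_add (Real.sqrt_nonneg 2) (Real.sqrt_nonneg 2),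
          ← ENNReal.ofReal_mul hcpos.le]
        congr 1
        rw [hc]
        nlinarith
    _ ≤ ENNReal.ofReal c * (μH[1] sp + μH[1] sm) :=
        mul_le_mul_right (add_le_add measp measm) _
    _ = (∫⁻ _ in sp, ENNReal.ofReal c ∂(μH[1])) + ∫⁻ _ in sm, ENNReal.ofReal c ∂(μH[1]) := by
        rw [setLIntegral_const, setLIntegral_const, mul_add]
    _ ≤ (∫⁻ ν in sp, ENNReal.ofReal |⟪w, ν⟫| ∂(μH[1]))
          + ∫⁻ ν in sm, ENNReal.ofReal |⟪w, ν⟫| ∂(μH[1]) :=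
        add_le_add (setLIntegral_mono' msp hpt_p) (setLIntegral_mono' msm hpt_m)
    _ = ∫⁻ ν in sp ∪ sm, ENNReal.ofReal |⟪w, ν⟫| ∂(μH[1]) := (lintegral_union msm hdisj).symm
    _ ≤ ∫⁻ ν in sphere (0 : E2) 1, ENNReal.ofReal |⟪w, ν⟫| ∂(μH[1]) := by
        apply lintegral_mono_set
        rw [hspdef, hsmdef]
        exact union_subset inter_subset_left inter_subset_left

end Stmt9Aux

open scoped RealInnerProductSpace in
/-- For a segment `[a,b] ⊂ ℝ²` and any `λ > 0`,
`I_λ([a,b]) ≥ (2/π)|a − b|`. -/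
theorem stmt_9 (a b : EuclideanSpace ℝ (Fin 2)) (lam : ℝ) (hlam : 0 < lam) :
    ENNReal.ofReal ((2 / Real.pi) * dist a b) ≤ Ilam lam (segment ℝ a b) := by
  rcases eq_or_ne a b with rfl | hne
  · simp
  obtain ⟨w, hwdef⟩ : ∃ w : EuclideanSpace ℝ (Fin 2),
      w = (WithLp.equiv 2 (Fin 2 → ℝ)).symm ![-((b - a) 1), (b - a) 0] := ⟨_, rfl⟩
  have hw0 : w 0 = -((b - a) 1) := by rw [hwdef]; rfl
  have hw1 : w 1 = (b - a) 0 := by rw [hwdef]; rfl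
  have hwn : ‖w‖ = dist a b := by
    rw [dist_eq_norm, EuclideanSpace.norm_eq, EuclideanSpace.norm_eq, Fin.sum_univ_two,
      Fin.sum_univ_two, hw0, hw1]
    congr 1
    simp only [Real.norm_eq_abs, PiLp.sub_apply]
    rw [abs_neg, abs_sub_comm (b 1), abs_sub_comm (b 0)]
    ring
  have hwne : w ≠ 0 := by
    intro h0
    apply hne
    rw [h0, norm_zero] at hwn
    exact dist_eq_zero.mp hwn.symm
  have hinner : ∀ ν : EuclideanSpace ℝ (Fin 2),
      ⟪w, ν⟫ = (b - a) 0 * ν 1 - (b - a) 1 * ν 0 := by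
    intro ν
    rw [PiLp.inner_apply, Fin.sum_univ_two]
    simp only [hw0, hw1, RCLike.inner_apply, conj_trivial]
    ring
  have hstep : ∀ ν : EuclideanSpace ℝ (Fin 2),
      ENNReal.ofReal (2 * lam) * ENNReal.ofReal |⟪w, ν⟫|
        ≤ volume (enlarge (segment ℝ a b) lam ν) := by
    intro ν
    rw [← ENNReal.ofReal_mul (by positivity), hinner ν]
    exact volume_enlarge_ge a b lam ν
  have hint := sphere_lintegral_ge w hwne
  have hπ := Real.pi_pos
  have hpos : (0:ℝ) < 2 * lam * Real.pi := by positivity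
  calc ENNReal.ofReal ((2 / Real.pi) * dist a b)
      = ENNReal.ofReal (1 / (2 * lam * Real.pi))
          * (ENNReal.ofReal (2 * lam) * ENNReal.ofReal (2 * ‖w‖)) := by
        rw [← ENNReal.ofReal_mul (by positivity), ← ENNReal.ofReal_mul (by positivity)]
        congr 1
        rw [← hwn]
        field_simp
    _ ≤ ENNReal.ofReal (1 / (2 * lam * Real.pi)) * (ENNReal.ofReal (2 * lam)
          * ∫⁻ ν in sphere (0 : EuclideanSpace ℝ (Fin 2)) 1,
              ENNReal.ofReal |⟪w, ν⟫| ∂(μH[1])) :=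
        mul_le_mul_right (mul_le_mul_right hint _) _
    _ = ENNReal.ofReal (1 / (2 * lam * Real.pi))
          * ∫⁻ ν in sphere (0 : EuclideanSpace ℝ (Fin 2)) 1,
              ENNReal.ofReal (2 * lam) * ENNReal.ofReal |⟪w, ν⟫| ∂(μH[1]) := by
        rw [lintegral_const_mul' _ _ ENNReal.ofReal_ne_top]
    _ ≤ Ilam lam (segment ℝ a b) :=
        mul_le_mul_right (lintegral_mono fun ν => hstep ν) _
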